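/- Let (M^{2n+1}, φ, ξ, η, g) be an almost α-Kenmotsu manifold such that the integral manifolds of the distribution D = ker η are Kähler manifolds. Then M^{2n+1} is an α-Kenmotsu manifold if and only if h' = 0, equivalently ∇ξ = −α φ², where ∇ is the Levi-Civita connection. In particular, a 3-dimensional almost α-Kenmotsu manifold with h' = 0 is an α-Kenmotsu manifold. -/

import Mathlib

/- Common framework: a (2n+1)-dimensional manifold is modelled by an open subset `s`
of Euclidean space; tensor fields are given pointwise (evaluated on constant vector
fields), connections are given by their Christoffel symbols, and covariant
derivatives / curvatures are expressed via `fderiv`. -/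

noncomputable section

namespace AKG

open scoped RealInnerProductSpace

abbrev E (m : ℕ) : Type := EuclideanSpace ℝ (Fin m)

variable {V : Type*} [NormedAddCommGroup V] [NormedSpace ℝ V]

/-- A Riemannian metric on `s`, as a pointwise symmetric positive bilinear form. -/
def IsMetricOn (s : Set V) (g : V → V → V → ℝ) : Prop :=
  (∀ u v : V, ContDiffOn ℝ (⊤ : ℕ∞) (fun p => g p u v) s) ∧
  (∀ p ∈ s, ∀ u v : V, g p u v = g p v u) ∧
  (∀ p ∈ s, ∀ v : V, IsLinearMap ℝ (fun u : V => g p u v)) ∧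
  (∀ p ∈ s, ∀ u : V, u ≠ 0 → 0 < g p u u)

/-- A linear connection on `s`, via its Christoffel symbols. -/
def IsConnectionOn (s : Set V) (Γ : V → V → V → V) : Prop :=
  (∀ u v : V, ContDiffOn ℝ (⊤ : ℕ∞) (fun p => Γ p u v) s) ∧
  (∀ p ∈ s, ∀ v : V, IsLinearMap ℝ (fun u : V => Γ p u v)) ∧
  (∀ p ∈ s, ∀ u : V, IsLinearMap ℝ (fun v : V => Γ p u v))

/-- The Levi-Civita connection of `g` on `s`: torsion-free and metric. -/
def IsLeviCivitaOn (s : Set V) (g : V → V → V → ℝ) (Γ : V → V → V → V) : Prop :=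
  IsConnectionOn s Γ ∧
  (∀ p ∈ s, ∀ u v : V, Γ p u v = Γ p v u) ∧
  (∀ p ∈ s, ∀ u v w : V,
    fderiv ℝ (fun q => g q v w) p u = g p (Γ p u v) w + g p v (Γ p u w))

/-- Covariant derivative `∇ᵤ X` of a vector field `X` at `p`. -/
def cov (Γ : V → V → V → V) (X : V → V) (p u : V) : V :=
  fderiv ℝ X p u + Γ p u (X p)

/-- Curvature tensor `R(u,v)w` at `p` (evaluated on constant extensions). -/
def Rm (Γ : V → V → V → V) (p u v w : V) : V :=
  fderiv ℝ (fun q => Γ q v w) p u - fderiv ℝ (fun q => Γ q u w) p v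
    + Γ p u (Γ p v w) - Γ p v (Γ p u w)

/-- Covariant derivative `(∇ᵤ A)(v)` of a (1,1)-tensor field `A`. -/
def covOp (Γ : V → V → V → V) (A : V → V → V) (p u v : V) : V :=
  fderiv ℝ (fun q => A q v) p u + Γ p u (A p v) - A p (Γ p u v)

/-- Covariant derivative of a (1,2)-tensor field. -/
def covT2 (Γ : V → V → V → V) (A : V → V → V → V) (p x u v : V) : V :=
  fderiv ℝ (fun q => A q u v) p x + Γ p x (A p u v)
    - A p (Γ p x u) v - A p u (Γ p x v)

/-- Covariant derivative of a (1,3)-tensor field. -/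
def covT3 (Γ : V → V → V → V) (B : V → V → V → V → V) (p x u v w : V) : V :=
  fderiv ℝ (fun q => B q u v w) p x + Γ p x (B p u v w)
    - B p (Γ p x u) v w - B p u (Γ p x v) w - B p u v (Γ p x w)

/-- Local symmetry: `∇R = 0`. -/
def LocallySymmetricOn (s : Set V) (Γ : V → V → V → V) : Prop :=
  ∀ p ∈ s, ∀ x u v w : V, covT3 Γ (Rm Γ) p x u v w = 0

/-- Constant sectional curvature `k`. -/
def ConstCurvOn (s : Set V) (g : V → V → V → ℝ) (Γ : V → V → V → V) (k : ℝ) : Prop :=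
  ∀ p ∈ s, ∀ u v w : V, Rm Γ p u v w = k • (g p v w • u - g p u w • v)

def HasConstCurv (s : Set V) (g : V → V → V → ℝ) (k : ℝ) : Prop :=
  ∃ Γ : V → V → V → V, IsLeviCivitaOn s g Γ ∧ ConstCurvOn s g Γ k

/-- Torsion of a connection (with the factor 1/2 normalization of the paper). -/
def torsion (Γ : V → V → V → V) (p u v : V) : V := (2 : ℝ)⁻¹ • (Γ p u v - Γ p v u)

/-- An almost contact metric structure on `s`. -/
structure ACM (s : Set V) where
  phi : V → V → V
  xi : V → V
  eta : V → V → ℝ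
  g : V → V → V → ℝ
  smooth_phi : ∀ u : V, ContDiffOn ℝ (⊤ : ℕ∞) (fun p => phi p u) s
  smooth_xi : ContDiffOn ℝ (⊤ : ℕ∞) xi s
  smooth_eta : ∀ u : V, ContDiffOn ℝ (⊤ : ℕ∞) (fun p => eta p u) s
  lin_phi : ∀ p ∈ s, IsLinearMap ℝ (phi p)
  lin_eta : ∀ p ∈ s, IsLinearMap ℝ (eta p)
  metric : IsMetricOn s g
  phi_sq : ∀ p ∈ s, ∀ u : V, phi p (phi p u) = -u + eta p u • xi p
  eta_xi : ∀ p ∈ s, eta p (xi p) = 1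
  compat : ∀ p ∈ s, ∀ u v : V, g p (phi p u) (phi p v) = g p u v - eta p u * eta p v

/-- Fundamental 2-form `Φ(u,v) = g(u, φ v)`. -/
def FPhi {s : Set V} (S : ACM s) (p u v : V) : ℝ := S.g p u (S.phi p v)

/-- Lie derivative `(L_ξ φ)(u)` at `p` (constant extension of `u`). -/
def lieXiPhi (phi : V → V → V) (xi : V → V) (p u : V) : V :=
  fderiv ℝ (fun q => phi q u) p (xi p) - fderiv ℝ xi p (phi p u)
    + phi p (fderiv ℝ xi p u)

/-- The operator `h' = (1/(2α)) (L_ξ φ) ∘ φ`. -/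
def hpr (α : ℝ) (phi : V → V → V) (xi : V → V) (p u : V) : V :=
  (1 / (2 * α)) • lieXiPhi phi xi p (phi p u)

/-- `dη(u,v)` (constant extensions). -/
def dEta (eta : V → V → ℝ) (p u v : V) : ℝ :=
  fderiv ℝ (fun q => eta q v) p u - fderiv ℝ (fun q => eta q u) p v

/-- `S` is an almost α-Kenmotsu structure on `s` : `dη = 0` and `dΦ = 2α η ∧ Φ`. -/
structure IsAK (s : Set V) (S : ACM s) (α : ℝ) : Prop where
  pos : 0 < α
  deta : ∀ p ∈ s, ∀ u v : V, dEta S.eta p u v = 0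
  dphi : ∀ p ∈ s, ∀ u v w : V,
    fderiv ℝ (fun q => FPhi S q v w) p u - fderiv ℝ (fun q => FPhi S q u w) p v
      + fderiv ℝ (fun q => FPhi S q u v) p w
    = 2 * α * (S.eta p u * FPhi S p v w - S.eta p v * FPhi S p u w
        + S.eta p w * FPhi S p u v)

/-- Nijenhuis torsion `[φ,φ](u,v)` at `p` (constant extensions). -/
def nijPhi (phi : V → V → V) (p u v : V) : V :=
  fderiv ℝ (fun q => phi q v) p (phi p u) - fderiv ℝ (fun q => phi q u) p (phi p v)
    + phi p (fderiv ℝ (fun q => phi q u) p v) - phi p (fderiv ℝ (fun q => phi q v) p u)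

/-- Normality: `N = [φ,φ] + 2 dη ⊗ ξ = 0`. -/
def IsNormal (s : Set V) (S : ACM s) : Prop :=
  ∀ p ∈ s, ∀ u v : V, nijPhi S.phi p u v + (2 * dEta S.eta p u v) • S.xi p = 0

/-- CR-integrability: the Nijenhuis torsion of φ vanishes on `D = ker η`
(equivalently the integral manifolds of `D` are Kähler). -/
def CRIntegrableOn (s : Set V) (S : ACM s) : Prop :=
  ∀ p ∈ s, ∀ u v : V, S.eta p u = 0 → S.eta p v = 0 → nijPhi S.phi p u v = 0

/-- `ξ` belongs to the (κ,μ)'-nullity distribution. -/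
def KMuNullity (s : Set V) (S : ACM s) (α κ μ : ℝ) (Γ : V → V → V → V) : Prop :=
  ∀ p ∈ s, ∀ u v : V,
    Rm Γ p u v (S.xi p)
      = κ • (S.eta p v • u - S.eta p u • v)
        + μ • (S.eta p v • hpr α S.phi S.xi p u - S.eta p u • hpr α S.phi S.xi p v)

/-- `h'` is η-parallel. -/
def EtaParallelH (s : Set V) (S : ACM s) (α : ℝ) (Γ : V → V → V → V) : Prop :=
  ∀ p ∈ s, ∀ u v w : V, S.eta p u = 0 → S.eta p v = 0 → S.eta p w = 0 →
    S.g p (covOp Γ (hpr α S.phi S.xi) p u v) w = 0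

/-- `∇_ξ h' = 0`. -/
def XiParallelH (s : Set V) (S : ACM s) (α : ℝ) (Γ : V → V → V → V) : Prop :=
  ∀ p ∈ s, ∀ v : V, covOp Γ (hpr α S.phi S.xi) p (S.xi p) v = 0

/-- The canonical connection `∇̃_X Y = ∇_X Y + α g(X + h'X, Y)ξ − α η(Y)(X + h'X)`. -/
def canonical {s : Set V} (α : ℝ) (S : ACM s) (Γ : V → V → V → V) : V → V → V → V :=
  fun p u v =>
    Γ p u v + (α * S.g p (u + hpr α S.phi S.xi p u) v) • S.xi p
      - (α * S.eta p v) • (u + hpr α S.phi S.xi p u)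

def ParallelTorsion (s : Set V) (Γ : V → V → V → V) : Prop :=
  ∀ p ∈ s, ∀ x u v : V, covT2 Γ (torsion Γ) p x u v = 0

def ParallelCurv (s : Set V) (Γ : V → V → V → V) : Prop :=
  ∀ p ∈ s, ∀ x u v w : V, covT3 Γ (Rm Γ) p x u v w = 0

def FlatCurv (s : Set V) (Γ : V → V → V → V) : Prop :=
  ∀ p ∈ s, ∀ u v w : V, Rm Γ p u v w = 0

def HasEigen (h : V → V) (c : ℝ) : Prop := ∃ u : V, u ≠ 0 ∧ h u = c • u

/-- Multiplicity of the eigenvalue `c` of a (pointwise linear) operator. -/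
def eigMult (h : V → V) (c : ℝ) : ℕ :=
  Module.finrank ℝ ↥(Submodule.span ℝ {u : V | h u = c • u})

/-- `0` is a simple eigenvalue of `h'`: its kernel is spanned by `ξ`. -/
def KernelIsXiLine (xi₀ : V) (h : V → V) : Prop :=
  ∀ u : V, h u = 0 → ∃ a : ℝ, u = a • xi₀

def hprNonzero (s : Set V) (S : ACM s) (α : ℝ) : Prop :=
  ∃ p ∈ s, ∃ u : V, hpr α S.phi S.xi p u ≠ 0

/-- `S'` is the D-homothetic deformation of `S` with constant `β`. -/
def IsDHom (s : Set V) (S S' : ACM s) (β : ℝ) : Prop :=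
  ∀ p ∈ s,
    (∀ u : V, S'.phi p u = S.phi p u) ∧ S'.xi p = β⁻¹ • S.xi p ∧
    (∀ u : V, S'.eta p u = β * S.eta p u) ∧
    (∀ u v : V, S'.g p u v = β * S.g p u v + β * (β - 1) * (S.eta p u * S.eta p v))

/-- Local equivalence of almost contact metric structures. -/
def LocallyEquivalent (s : Set V) (S : ACM s) (s' : Set V) (S' : ACM s') : Prop :=
  ∀ p ∈ s, ∀ q ∈ s', ∃ (U U' : Set V) (f finv : V → V),
    p ∈ U ∧ IsOpen U ∧ U ⊆ s ∧ q ∈ U' ∧ IsOpen U' ∧ U' ⊆ s' ∧ f p = q ∧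
    ContDiffOn ℝ (⊤ : ℕ∞) f U ∧ Set.BijOn f U U' ∧
    ContDiffOn ℝ (⊤ : ℕ∞) finv U' ∧ (∀ x ∈ U, finv (f x) = x) ∧
    ∀ x ∈ U,
      fderiv ℝ f x (S.xi x) = S'.xi (f x) ∧
      (∀ u : V, fderiv ℝ f x (S.phi x u) = S'.phi (f x) (fderiv ℝ f x u)) ∧
      (∀ u : V, S'.eta (f x) (fderiv ℝ f x u) = S.eta x u) ∧
      (∀ u v : V, S'.g (f x) (fderiv ℝ f x u) (fderiv ℝ f x v) = S.g x u v)

/-- Local equivalence up to a D-homothetic deformation. -/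
def EquivUpToDHom (s : Set V) (S : ACM s) (s' : Set V) (S' : ACM s') : Prop :=
  ∃ β : ℝ, 0 < β ∧ ∃ S₁ : ACM s, IsDHom s S S₁ β ∧ LocallyEquivalent s S₁ s' S'

/-- Involutivity (integrability) of a distribution. -/
def IsInvolutive (s : Set V) (D : V → Set V) : Prop :=
  ∀ X Y : V → V, (∀ p ∈ s, DifferentiableAt ℝ X p) → (∀ p ∈ s, DifferentiableAt ℝ Y p) →
    (∀ p ∈ s, X p ∈ D p) → (∀ p ∈ s, Y p ∈ D p) →
    ∀ p ∈ s, fderiv ℝ Y p (X p) - fderiv ℝ X p (Y p) ∈ D p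

/-- The leaves of the distribution `D` are totally geodesic. -/
def TotallyGeodesicDist (s : Set V) (D : V → Set V) (Γ : V → V → V → V) : Prop :=
  ∀ X Y : V → V, (∀ p ∈ s, DifferentiableAt ℝ X p) → (∀ p ∈ s, DifferentiableAt ℝ Y p) →
    (∀ p ∈ s, X p ∈ D p) → (∀ p ∈ s, Y p ∈ D p) →
    ∀ p ∈ s, cov Γ Y p (X p) ∈ D p

/-- The leaves of the distribution `D` are totally umbilical. -/
def TotallyUmbilicalDist (s : Set V) (D : V → Set V) (g : V → V → V → ℝ)
    (Γ : V → V → V → V) : Prop :=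
  ∃ H : V → V, (∀ p ∈ s, ∀ w ∈ D p, g p (H p) w = 0) ∧
    ∀ X Y : V → V, (∀ p ∈ s, DifferentiableAt ℝ X p) → (∀ p ∈ s, DifferentiableAt ℝ Y p) →
      (∀ p ∈ s, X p ∈ D p) → (∀ p ∈ s, Y p ∈ D p) →
      ∀ p ∈ s, cov Γ Y p (X p) - g p (X p) (Y p) • H p ∈ D p

/-- The eigendistribution `[λ]` of `h'`. -/
def eigDist {s : Set V} (α : ℝ) (S : ACM s) (lam : ℝ) : V → Set V :=
  fun p => {u : V | hpr α S.phi S.xi p u = lam • u ∧ S.eta p u = 0}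

/-- The distribution `[ξ] ⊕ [λ]`. -/
def xiPlusEigDist {s : Set V} (α : ℝ) (S : ACM s) (lam : ℝ) : V → Set V :=
  fun p => {u : V | hpr α S.phi S.xi p u = lam • (u - S.eta p u • S.xi p)}

/-- An almost Hermitian structure on an open set of `E m`. -/
structure AHerm (m : ℕ) (W : Set (E m)) where
  J : E m → E m → E m
  h : E m → E m → E m → ℝ
  smooth_J : ∀ u : E m, ContDiffOn ℝ (⊤ : ℕ∞) (fun p => J p u) W
  lin_J : ∀ p ∈ W, IsLinearMap ℝ (J p)
  metric : IsMetricOn W h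
  J_sq : ∀ p ∈ W, ∀ u : E m, J p (J p u) = -u
  compat : ∀ p ∈ W, ∀ u v : E m, h p (J p u) (J p v) = h p u v

/-- The Kähler form of an almost Hermitian structure. -/
def Kform {m : ℕ} {W : Set (E m)} (K : AHerm m W) (p u v : E m) : ℝ := K.h p u (K.J p v)

/-- Almost Kähler: the Kähler form is closed. -/
def IsAlmostKaehler {m : ℕ} {W : Set (E m)} (K : AHerm m W) : Prop :=
  ∀ p ∈ W, ∀ u v w : E m,
    fderiv ℝ (fun q => Kform K q v w) p u - fderiv ℝ (fun q => Kform K q u w) p v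
      + fderiv ℝ (fun q => Kform K q u v) p w = 0

/-- Kähler: almost Kähler with integrable `J`. -/
def IsKaehler {m : ℕ} {W : Set (E m)} (K : AHerm m W) : Prop :=
  IsAlmostKaehler K ∧ ∀ p ∈ W, ∀ u v : E m, nijPhi K.J p u v = 0

/-- `M` is locally a warped product `M' ×_f N` of an open interval and an almost
Kähler manifold, with warping function `f = c e^{α t}`. -/
def LocWarpedIntervalAK (n : ℕ) (s : Set (E (2*n+1))) (S : ACM s) (α : ℝ) : Prop :=
  ∀ p ∈ s, ∃ (U : Set (E (2*n+1))) (I : Set ℝ) (W : Set (E (2*n)))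
    (K : AHerm (2*n) W) (c : ℝ) (ψ : E (2*n+1) → ℝ × E (2*n))
    (χ : ℝ × E (2*n) → E (2*n+1)),
    p ∈ U ∧ IsOpen U ∧ U ⊆ s ∧ IsOpen I ∧ I.OrdConnected ∧ IsOpen W ∧
    IsAlmostKaehler K ∧ 0 < c ∧
    ContDiffOn ℝ (⊤ : ℕ∞) ψ U ∧ Set.BijOn ψ U (I ×ˢ W) ∧
    ContDiffOn ℝ (⊤ : ℕ∞) χ (I ×ˢ W) ∧ (∀ x ∈ U, χ (ψ x) = x) ∧
    ∀ q ∈ U, ∀ u v : E (2*n+1),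
      S.g q u v = (fderiv ℝ ψ q u).1 * (fderiv ℝ ψ q v).1
        + (c * Real.exp (α * (ψ q).1))^2
          * K.h (ψ q).2 (fderiv ℝ ψ q u).2 (fderiv ℝ ψ q v).2

/-- Local isometry with a Riemannian product of constant curvature manifolds. -/
def LocIsomProd (m n₁ n₂ : ℕ) (s : Set (E m)) (g : E m → E m → E m → ℝ)
    (k₁ k₂ : ℝ) : Prop :=
  ∀ p ∈ s, ∃ (U : Set (E m)) (W₁ : Set (E n₁)) (W₂ : Set (E n₂))
    (g₁ : E n₁ → E n₁ → E n₁ → ℝ) (g₂ : E n₂ → E n₂ → E n₂ → ℝ)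
    (ψ : E m → E n₁ × E n₂) (χ : E n₁ × E n₂ → E m),
    p ∈ U ∧ IsOpen U ∧ U ⊆ s ∧ IsOpen W₁ ∧ IsOpen W₂ ∧
    IsMetricOn W₁ g₁ ∧ IsMetricOn W₂ g₂ ∧
    HasConstCurv W₁ g₁ k₁ ∧ HasConstCurv W₂ g₂ k₂ ∧
    ContDiffOn ℝ (⊤ : ℕ∞) ψ U ∧ Set.BijOn ψ U (W₁ ×ˢ W₂) ∧
    ContDiffOn ℝ (⊤ : ℕ∞) χ (W₁ ×ˢ W₂) ∧ (∀ x ∈ U, χ (ψ x) = x) ∧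
    ∀ q ∈ U, ∀ u v : E m,
      g q u v = g₁ (ψ q).1 (fderiv ℝ ψ q u).1 (fderiv ℝ ψ q v).1
        + g₂ (ψ q).2 (fderiv ℝ ψ q u).2 (fderiv ℝ ψ q v).2

/-- The axioms characterizing the canonical connection of a CR-integrable
almost α-Kenmotsu structure: `φ`, `g`, `η` parallel, together with the
torsion conditions a), b), c). -/
def IsCanonicalFor (s : Set V) (S : ACM s) (α : ℝ) (Γt : V → V → V → V) : Prop :=
  IsConnectionOn s Γt ∧
  (∀ p ∈ s, ∀ u v : V, covOp Γt S.phi p u v = 0) ∧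
  (∀ p ∈ s, ∀ u v w : V,
    fderiv ℝ (fun q => S.g q v w) p u = S.g p (Γt p u v) w + S.g p v (Γt p u w)) ∧
  (∀ p ∈ s, ∀ u v : V, fderiv ℝ (fun q => S.eta q v) p u = S.eta p (Γt p u v)) ∧
  (∀ p ∈ s, ∀ u v : V, S.eta p u = 0 → S.eta p v = 0 → torsion Γt p u v = 0) ∧
  (∀ p ∈ s, ∀ u : V, S.eta p u = 0 →
    (2 : ℝ) • torsion Γt p (S.xi p) u = α • (u + hpr α S.phi S.xi p u)) ∧
  (∀ p ∈ s, ∀ u v : V, S.g p (torsion Γt p (S.xi p) u) v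
    = S.g p u (torsion Γt p (S.xi p) v))

section Proofs

open Filter Topology

variable {m : ℕ}

private lemma diffAt {W : Type*} [NormedAddCommGroup W] [NormedSpace ℝ W]
    {s : Set (E m)} (hs : IsOpen s) {f : E m → W}
    (hf : ContDiffOn ℝ (⊤ : ℕ∞) f s) {p : E m} (hp : p ∈ s) :
    DifferentiableAt ℝ f p :=
  (hf.differentiableOn (by simp)).differentiableAt (hs.mem_nhds hp)

private lemma coord_diff {X : E m → E m} {p : E m} (hX : DifferentiableAt ℝ X p) (i : Fin m) :
    DifferentiableAt ℝ (fun q => X q i) p := by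
  have : DifferentiableAt ℝ (fun q => (EuclideanSpace.proj (𝕜 := ℝ) i) (X q)) p :=
    (EuclideanSpace.proj (𝕜 := ℝ) i).differentiableAt.comp p hX
  simpa using this

private lemma coord_fderiv {X : E m → E m} {p : E m} (hX : DifferentiableAt ℝ X p) (i : Fin m)
    (x : E m) : fderiv ℝ (fun q => X q i) p x = (fderiv ℝ X p x) i := by
  have h := fderiv_comp (𝕜 := ℝ) p (EuclideanSpace.proj (𝕜 := ℝ) i).differentiableAt hX
  rw [(EuclideanSpace.proj (𝕜 := ℝ) i).fderiv] at h
  have h2 : (fun q => X q i) = (⇑(EuclideanSpace.proj (𝕜 := ℝ) i)) ∘ X := rfl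
  rw [h2, h]
  simp

private lemma euclid_sum (v : E m) :
    ∑ i, v i • (EuclideanSpace.basisFun (Fin m) ℝ) i = v := by
  have h := (EuclideanSpace.basisFun (Fin m) ℝ).sum_repr v
  simpa [EuclideanSpace.basisFun_repr] using h

private lemma bilin_diff {W : Type*} [NormedAddCommGroup W] [NormedSpace ℝ W]
    {s : Set (E m)} (hs : IsOpen s) (A : E m → E m → W) {p : E m} (hp : p ∈ s)
    (hA : ∀ a : E m, DifferentiableAt ℝ (fun q => A q a) p)
    (hlin : ∀ q ∈ s, IsLinearMap ℝ (A q))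
    {X : E m → E m} (hX : DifferentiableAt ℝ X p) :
    DifferentiableAt ℝ (fun q => A q (X q)) p ∧
    ∀ x, fderiv ℝ (fun q => A q (X q)) p x
      = fderiv ℝ (fun q => A q (X p)) p x + A p (fderiv ℝ X p x) := by
  classical
  set b : Fin m → E m := fun i => (EuclideanSpace.basisFun (Fin m) ℝ) i with hbdef
  have hb : ∀ v : E m, ∑ i, v i • b i = v := euclid_sum
  have hmem : s ∈ 𝓝 p := hs.mem_nhds hp
  have key : ∀ Y : E m → E m, (fun q => A q (Y q)) =ᶠ[𝓝 p] fun q => ∑ i, Y q i • A q (b i) := by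
    intro Y
    filter_upwards [hmem] with q hq
    have hl := hlin q hq
    have h1 : A q (Y q) = A q (∑ i, Y q i • b i) := by rw [hb]
    have h2 := map_sum (IsLinearMap.mk' (A q) hl) (fun i => Y q i • b i) Finset.univ
    simp only [IsLinearMap.mk'_apply] at h2
    rw [h1, h2]
    exact Finset.sum_congr rfl fun i _ => hl.map_smul _ _
  have hdterm : ∀ i : Fin m, DifferentiableAt ℝ (fun q => X q i • A q (b i)) p :=
    fun i => (coord_diff hX i).smul (hA (b i))
  have hdsum : DifferentiableAt ℝ (fun q => ∑ i, X q i • A q (b i)) p :=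
    DifferentiableAt.fun_sum fun i _ => hdterm i
  have hdiff : DifferentiableAt ℝ (fun q => A q (X q)) p :=
    hdsum.congr_of_eventuallyEq (key X)
  refine ⟨hdiff, fun x => ?_⟩
  have h1 : fderiv ℝ (fun q => A q (X q)) p = fderiv ℝ (fun q => ∑ i, X q i • A q (b i)) p :=
    (key X).fderiv_eq
  have h2 : fderiv ℝ (fun q => ∑ i, X q i • A q (b i)) p
      = ∑ i, fderiv ℝ (fun q => X q i • A q (b i)) p :=
    fderiv_fun_sum fun i _ => hdterm i
  have h3 : ∀ i : Fin m, fderiv ℝ (fun q => X q i • A q (b i)) p x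
      = X p i • fderiv ℝ (fun q => A q (b i)) p x
        + (fderiv ℝ X p x) i • A p (b i) := by
    intro i
    rw [fderiv_fun_smul (coord_diff hX i) (hA (b i))]
    simp [ContinuousLinearMap.add_apply, ContinuousLinearMap.smul_apply,
      ContinuousLinearMap.smulRight_apply, coord_fderiv hX i x]
  -- constant slot
  have hc1 : fderiv ℝ (fun q => A q (X p)) p = fderiv ℝ (fun q => ∑ i, X p i • A q (b i)) p := by
    apply Filter.EventuallyEq.fderiv_eq
    filter_upwards [hmem] with q hq
    have hl := hlin q hq
    have h2' := map_sum (IsLinearMap.mk' (A q) hl) (fun i => X p i • b i) Finset.univ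
    simp only [IsLinearMap.mk'_apply] at h2'
    rw [show A q (X p) = A q (∑ i, X p i • b i) by rw [hb], h2']
    exact Finset.sum_congr rfl fun i _ => hl.map_smul _ _
  have hc2 : fderiv ℝ (fun q => ∑ i, X p i • A q (b i)) p
      = ∑ i, X p i • fderiv ℝ (fun q => A q (b i)) p :=
    (fderiv_fun_sum fun i _ => (hA (b i)).const_smul (X p i)).trans
      (Finset.sum_congr rfl fun i _ => fderiv_fun_const_smul (hA (b i)) (X p i))
  have h4 : A p (fderiv ℝ X p x) = ∑ i, (fderiv ℝ X p x) i • A p (b i) := by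
    have hl := hlin p hp
    have h2' := map_sum (IsLinearMap.mk' (A p) hl) (fun i => (fderiv ℝ X p x) i • b i) Finset.univ
    simp only [IsLinearMap.mk'_apply] at h2'
    rw [show A p (fderiv ℝ X p x) = A p (∑ i, (fderiv ℝ X p x) i • b i) by rw [hb], h2']
    exact Finset.sum_congr rfl fun i _ => hl.map_smul _ _
  rw [h1, h2, hc1, hc2, h4]
  simp only [ContinuousLinearMap.sum_apply]
  rw [Finset.sum_congr rfl fun i _ => h3 i, Finset.sum_add_distrib]
  simp only [ContinuousLinearMap.smul_apply]

private lemma slot_add {W : Type*} [NormedAddCommGroup W] [NormedSpace ℝ W]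
    {s : Set (E m)} (hs : IsOpen s) (A : E m → E m → W) {p : E m} (hp : p ∈ s)
    (hA : ∀ a : E m, DifferentiableAt ℝ (fun q => A q a) p)
    (hlin : ∀ q ∈ s, IsLinearMap ℝ (A q)) (a c : E m) :
    fderiv ℝ (fun q => A q (a + c)) p
      = fderiv ℝ (fun q => A q a) p + fderiv ℝ (fun q => A q c) p := by
  have hEv : (fun q => A q (a + c)) =ᶠ[𝓝 p] fun q => A q a + A q c := by
    filter_upwards [hs.mem_nhds hp] with q hq
    exact (hlin q hq).map_add a c
  rw [hEv.fderiv_eq, fderiv_fun_add (hA a) (hA c)]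

private lemma slot_smul {W : Type*} [NormedAddCommGroup W] [NormedSpace ℝ W]
    {s : Set (E m)} (hs : IsOpen s) (A : E m → E m → W) {p : E m} (hp : p ∈ s)
    (hA : ∀ a : E m, DifferentiableAt ℝ (fun q => A q a) p)
    (hlin : ∀ q ∈ s, IsLinearMap ℝ (A q)) (c : ℝ) (a : E m) :
    fderiv ℝ (fun q => A q (c • a)) p = c • fderiv ℝ (fun q => A q a) p := by
  have hEv : (fun q => A q (c • a)) =ᶠ[𝓝 p] fun q => c • A q a := by
    filter_upwards [hs.mem_nhds hp] with q hq
    exact (hlin q hq).map_smul c a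
  rw [hEv.fderiv_eq, fderiv_fun_const_smul (hA a) c]

end Proofs
section Proofs2

open Filter Topology

variable {m : ℕ} {s : Set (E m)} {S : ACM s} {p : E m}

/-! ### Pointwise algebraic lemmas -/

private lemma eta_add' (hp : p ∈ s) (u v : E m) :
    S.eta p (u + v) = S.eta p u + S.eta p v := (S.lin_eta p hp).map_add u v

private lemma eta_smul' (hp : p ∈ s) (c : ℝ) (u : E m) :
    S.eta p (c • u) = c * S.eta p u := by
  simpa [smul_eq_mul] using (S.lin_eta p hp).map_smul c u

private lemma eta_sub' (hp : p ∈ s) (u v : E m) :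
    S.eta p (u - v) = S.eta p u - S.eta p v := (S.lin_eta p hp).map_sub u v

private lemma eta_zero' (hp : p ∈ s) : S.eta p 0 = 0 := (S.lin_eta p hp).map_zero

private lemma phi_add' (hp : p ∈ s) (u v : E m) :
    S.phi p (u + v) = S.phi p u + S.phi p v := (S.lin_phi p hp).map_add u v

private lemma phi_smul' (hp : p ∈ s) (c : ℝ) (u : E m) :
    S.phi p (c • u) = c • S.phi p u := (S.lin_phi p hp).map_smul c u

private lemma phi_sub' (hp : p ∈ s) (u v : E m) :
    S.phi p (u - v) = S.phi p u - S.phi p v := (S.lin_phi p hp).map_sub u v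

private lemma phi_neg' (hp : p ∈ s) (u : E m) :
    S.phi p (-u) = -S.phi p u := (S.lin_phi p hp).map_neg u

private lemma phi_zero' (hp : p ∈ s) : S.phi p 0 = 0 := (S.lin_phi p hp).map_zero

private lemma g_symm' (hp : p ∈ s) (u v : E m) : S.g p u v = S.g p v u :=
  S.metric.2.1 p hp u v

private lemma g_add1 (hp : p ∈ s) (u v w : E m) :
    S.g p (u + v) w = S.g p u w + S.g p v w := (S.metric.2.2.1 p hp w).map_add u v

private lemma g_smul1 (hp : p ∈ s) (c : ℝ) (u w : E m) :
    S.g p (c • u) w = c * S.g p u w := by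
  simpa [smul_eq_mul] using (S.metric.2.2.1 p hp w).map_smul c u

private lemma g_sub1 (hp : p ∈ s) (u v w : E m) :
    S.g p (u - v) w = S.g p u w - S.g p v w := (S.metric.2.2.1 p hp w).map_sub u v

private lemma g_neg1 (hp : p ∈ s) (u w : E m) :
    S.g p (-u) w = -S.g p u w := (S.metric.2.2.1 p hp w).map_neg u

private lemma g_zero1 (hp : p ∈ s) (w : E m) : S.g p 0 w = 0 :=
  (S.metric.2.2.1 p hp w).map_zero

private lemma g_add2 (hp : p ∈ s) (u v w : E m) :
    S.g p u (v + w) = S.g p u v + S.g p u w := by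
  rw [g_symm' hp, g_add1 hp, g_symm' hp v u, g_symm' hp w u]

private lemma g_smul2 (hp : p ∈ s) (c : ℝ) (u w : E m) :
    S.g p u (c • w) = c * S.g p u w := by
  rw [g_symm' hp, g_smul1 hp, g_symm' hp w u]

private lemma g_sub2 (hp : p ∈ s) (u v w : E m) :
    S.g p u (v - w) = S.g p u v - S.g p u w := by
  rw [g_symm' hp, g_sub1 hp, g_symm' hp v u, g_symm' hp w u]

private lemma g_neg2 (hp : p ∈ s) (u w : E m) :
    S.g p u (-w) = -S.g p u w := by
  rw [g_symm' hp, g_neg1 hp, g_symm' hp w u]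

private lemma g_zero2 (hp : p ∈ s) (u : E m) : S.g p u 0 = 0 := by
  rw [g_symm' hp, g_zero1 hp]

private lemma g_lin2 (hp : p ∈ s) (u : E m) : IsLinearMap ℝ (fun v => S.g p u v) :=
  ⟨fun a b => g_add2 hp u a b, fun c a => by simp [g_smul2 hp c u a, smul_eq_mul]⟩

private lemma g_nondeg (hp : p ∈ s) {x : E m} (h : ∀ w, S.g p x w = 0) : x = 0 := by
  by_contra hx
  have := S.metric.2.2.2 p hp x hx
  rw [h x] at this
  exact lt_irrefl 0 this

private lemma phi_xi_gxx (hp : p ∈ s) :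
    S.phi p (S.xi p) = 0 ∧ S.g p (S.xi p) (S.xi p) = 1 := by
  set k := S.phi p (S.xi p) with hk
  set c := S.eta p k with hc
  have h1 : S.phi p k = 0 := by
    rw [hk, S.phi_sq p hp, S.eta_xi p hp, one_smul, neg_add_cancel]
  have h2 : k = c • S.xi p := by
    have h := S.phi_sq p hp k
    rw [h1, phi_zero' hp] at h
    have := h.symm
    rw [← hc] at this
    linear_combination (norm := module) -this
  have e1 : S.g p k k = S.g p (S.xi p) (S.xi p) - 1 := by
    have := S.compat p hp (S.xi p) (S.xi p)
    rw [S.eta_xi p hp] at this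
    simpa [← hk] using this
  have e2 : (0:ℝ) = S.g p k k - c * c := by
    have := S.compat p hp k k
    rw [h1, g_zero1 hp, ← hc] at this
    linarith [this]
  have e3 : S.g p k k = c * c * S.g p (S.xi p) (S.xi p) := by
    rw [h2, g_smul1 hp, g_smul2 hp]; ring
  have h4 : c ^ 4 = 0 := by
    linear_combination (c*c) * e1 + (c*c - 1) * e2 + (-1 : ℝ) * e3
  have hc0 : c = 0 := by
    exact (pow_eq_zero_iff (M₀ := ℝ) (n := 4) (by norm_num)).mp h4
  have hg1 : S.g p (S.xi p) (S.xi p) = 1 := by nlinarith [e1, e2, hc0]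
  refine ⟨?_, hg1⟩
  rw [h2, hc0, zero_smul]

private lemma phi_xi' (hp : p ∈ s) : S.phi p (S.xi p) = 0 := (phi_xi_gxx hp).1

private lemma g_xi_xi (hp : p ∈ s) : S.g p (S.xi p) (S.xi p) = 1 := (phi_xi_gxx hp).2

private lemma eta_phi' (hp : p ∈ s) (u : E m) : S.eta p (S.phi p u) = 0 := by
  have h1 : S.phi p (S.phi p (S.phi p u)) = -S.phi p u + S.eta p (S.phi p u) • S.xi p :=
    S.phi_sq p hp (S.phi p u)
  have h2 : S.phi p (S.phi p (S.phi p u)) = -S.phi p u := by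
    rw [S.phi_sq p hp u, phi_add' hp, phi_neg' hp, phi_smul' hp, phi_xi' hp, smul_zero, add_zero]
  rw [h2] at h1
  have h3 : S.eta p (S.phi p u) • S.xi p = 0 := by
    linear_combination (norm := module) -h1
  have h4 := congrArg (S.eta p) h3
  rw [eta_smul' hp, S.eta_xi p hp, eta_zero' hp, mul_one] at h4
  exact h4

private lemma g_eta (hp : p ∈ s) (u : E m) : S.g p u (S.xi p) = S.eta p u := by
  have := S.compat p hp u (S.xi p)
  rw [phi_xi' hp, g_zero2 hp, S.eta_xi p hp, mul_one] at this
  linarith [this]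

private lemma g_eta' (hp : p ∈ s) (u : E m) : S.g p (S.xi p) u = S.eta p u := by
  rw [g_symm' hp, g_eta hp]

private lemma g_phi_skew (hp : p ∈ s) (u v : E m) :
    S.g p u (S.phi p v) = -S.g p (S.phi p u) v := by
  have h := S.compat p hp u (S.phi p v)
  rw [eta_phi' hp, mul_zero, sub_zero] at h
  rw [S.phi_sq p hp v] at h
  rw [g_add2 hp, g_neg2 hp, g_smul2 hp, g_eta hp, eta_phi' hp, mul_zero, add_zero] at h
  linarith [h]

end Proofs2
section Proofs3

open Filter Topology

variable {m : ℕ} {s : Set (E m)} {S : ACM s} {p : E m} {α : ℝ}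

private lemma dphiA (hs : IsOpen s) (hp : p ∈ s) (a : E m) :
    DifferentiableAt ℝ (fun q => S.phi q a) p := diffAt hs (S.smooth_phi a) hp

private lemma detaA (hs : IsOpen s) (hp : p ∈ s) (a : E m) :
    DifferentiableAt ℝ (fun q => S.eta q a) p := diffAt hs (S.smooth_eta a) hp

private lemma dxiA (hs : IsOpen s) (hp : p ∈ s) :
    DifferentiableAt ℝ S.xi p := diffAt hs S.smooth_xi hp

private lemma dgA (hs : IsOpen s) (hp : p ∈ s) (a b : E m) :
    DifferentiableAt ℝ (fun q => S.g q a b) p := diffAt hs (S.metric.1 a b) hp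

private lemma phixi_rule (hs : IsOpen s) (hp : p ∈ s) (x : E m) :
    fderiv ℝ (fun q => S.phi q (S.xi p)) p x = - S.phi p (fderiv ℝ S.xi p x) := by
  have hb := bilin_diff hs S.phi hp (fun a => dphiA (S := S) hs hp a) S.lin_phi (dxiA (S := S) hs hp)
  have h0 : (fun q => S.phi q (S.xi q)) =ᶠ[𝓝 p] (fun _ => (0 : E m)) := by
    filter_upwards [hs.mem_nhds hp] with q hq
    exact phi_xi' hq
  have h1 : fderiv ℝ (fun q => S.phi q (S.xi q)) p = 0 := by
    rw [h0.fderiv_eq]; exact fderiv_const_apply _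
  have h2 := hb.2 x
  rw [h1] at h2
  simp only [ContinuousLinearMap.zero_apply] at h2
  linear_combination (norm := module) -h2

private lemma etaxi_rule (hs : IsOpen s) (hp : p ∈ s) (x : E m) :
    fderiv ℝ (fun q => S.eta q (S.xi p)) p x = - S.eta p (fderiv ℝ S.xi p x) := by
  have hb := bilin_diff hs S.eta hp (fun a => detaA (S := S) hs hp a) S.lin_eta (dxiA (S := S) hs hp)
  have h0 : (fun q => S.eta q (S.xi q)) =ᶠ[𝓝 p] (fun _ => (1 : ℝ)) := by
    filter_upwards [hs.mem_nhds hp] with q hq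
    exact S.eta_xi q hq
  have h1 : fderiv ℝ (fun q => S.eta q (S.xi q)) p = 0 := by
    rw [h0.fderiv_eq]; exact fderiv_const_apply _
  have h2 := hb.2 x
  rw [h1] at h2
  simp only [ContinuousLinearMap.zero_apply] at h2
  linarith [h2]

private lemma etaphi_rule (hs : IsOpen s) (hp : p ∈ s) (a x : E m) :
    fderiv ℝ (fun q => S.eta q (S.phi p a)) p x
      = - S.eta p (fderiv ℝ (fun q => S.phi q a) p x) := by
  have hb := bilin_diff hs S.eta hp (fun c => detaA (S := S) hs hp c) S.lin_eta (dphiA (S := S) hs hp a)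
  have h0 : (fun q => S.eta q (S.phi q a)) =ᶠ[𝓝 p] (fun _ => (0 : ℝ)) := by
    filter_upwards [hs.mem_nhds hp] with q hq
    exact eta_phi' hq a
  have h1 : fderiv ℝ (fun q => S.eta q (S.phi q a)) p = 0 := by
    rw [h0.fderiv_eq]; exact fderiv_const_apply _
  have h2 := hb.2 x
  rw [h1] at h2
  simp only [ContinuousLinearMap.zero_apply] at h2
  linarith [h2]

private lemma phi2_rule (hs : IsOpen s) (hp : p ∈ s) (a x : E m) :
    fderiv ℝ (fun q => S.phi q (S.phi p a)) p x
      = fderiv ℝ (fun q => S.eta q a) p x • S.xi p + S.eta p a • fderiv ℝ S.xi p x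
        - S.phi p (fderiv ℝ (fun q => S.phi q a) p x) := by
  have hb := bilin_diff hs S.phi hp (fun c => dphiA (S := S) hs hp c) S.lin_phi (dphiA (S := S) hs hp a)
  have h0 : (fun q => S.phi q (S.phi q a)) =ᶠ[𝓝 p] (fun q => -a + S.eta q a • S.xi q) := by
    filter_upwards [hs.mem_nhds hp] with q hq
    exact S.phi_sq q hq a
  have h1 : fderiv ℝ (fun q => S.phi q (S.phi q a)) p x
      = S.eta p a • fderiv ℝ S.xi p x + fderiv ℝ (fun q => S.eta q a) p x • S.xi p := by
    rw [h0.fderiv_eq, fderiv_const_add, fderiv_fun_smul (detaA hs hp a) (dxiA (S := S) hs hp)]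
    simp [ContinuousLinearMap.add_apply, ContinuousLinearMap.smul_apply,
      ContinuousLinearMap.smulRight_apply]
  have h2 := hb.2 x
  rw [h1] at h2
  linear_combination (norm := module) -h2

private lemma gxi_rule (hs : IsOpen s) (hp : p ∈ s) (a x : E m) :
    fderiv ℝ (fun q => S.g q a (S.xi p)) p x
      = fderiv ℝ (fun q => S.eta q a) p x - S.g p a (fderiv ℝ S.xi p x) := by
  have hb := bilin_diff hs (fun q v => S.g q a v) hp (fun c => dgA (S := S) hs hp a c)
    (fun q hq => g_lin2 hq a) (dxiA (S := S) hs hp)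
  have h0 : (fun q => S.g q a (S.xi q)) =ᶠ[𝓝 p] (fun q => S.eta q a) := by
    filter_upwards [hs.mem_nhds hp] with q hq
    exact g_eta hq a
  have h2 := hb.2 x
  rw [h0.fderiv_eq] at h2
  linarith [h2]

private lemma gphi_rule (hs : IsOpen s) (hp : p ∈ s) (a b x : E m) :
    fderiv ℝ (fun q => S.g q a (S.phi q b)) p x
      = fderiv ℝ (fun q => S.g q a (S.phi p b)) p x
        + S.g p a (fderiv ℝ (fun q => S.phi q b) p x) :=
  (bilin_diff hs (fun q v => S.g q a v) hp (fun c => dgA (S := S) hs hp a c)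
    (fun q hq => g_lin2 hq a) (dphiA (S := S) hs hp b)).2 x

private lemma gswap (hs : IsOpen s) (hp : p ∈ s) (a b : E m) :
    fderiv ℝ (fun q => S.g q a b) p = fderiv ℝ (fun q => S.g q b a) p := by
  apply Filter.EventuallyEq.fderiv_eq
  filter_upwards [hs.mem_nhds hp] with q hq
  exact g_symm' hq a b

private lemma deta_symm (hAK : IsAK s S α) (hp : p ∈ s) (u v : E m) :
    fderiv ℝ (fun q => S.eta q v) p u = fderiv ℝ (fun q => S.eta q u) p v := by
  have := hAK.deta p hp u v
  simp only [dEta] at this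
  linarith [this]

private lemma fderiv_phi_add (hs : IsOpen s) (hp : p ∈ s) (a c : E m) :
    fderiv ℝ (fun q => S.phi q (a + c)) p
      = fderiv ℝ (fun q => S.phi q a) p + fderiv ℝ (fun q => S.phi q c) p :=
  slot_add hs S.phi hp (fun b => dphiA (S := S) hs hp b) S.lin_phi a c

private lemma fderiv_phi_smul (hs : IsOpen s) (hp : p ∈ s) (c : ℝ) (a : E m) :
    fderiv ℝ (fun q => S.phi q (c • a)) p = c • fderiv ℝ (fun q => S.phi q a) p :=
  slot_smul hs S.phi hp (fun b => dphiA (S := S) hs hp b) S.lin_phi c a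

end Proofs3
section Proofs4

open Filter Topology

variable {m : ℕ} {s : Set (E m)} {S : ACM s} {p : E m} {α : ℝ}

private lemma nij_xi (hs : IsOpen s) (hp : p ∈ s) (u : E m) :
    nijPhi S.phi p u (S.xi p) = S.phi p (lieXiPhi S.phi S.xi p u) := by
  simp only [nijPhi, lieXiPhi]
  rw [phi_xi' hp, (fderiv ℝ (fun q => S.phi q u) p).map_zero]
  rw [phixi_rule hs hp (S.phi p u), phixi_rule hs hp u]
  rw [phi_neg' hp]
  rw [phi_add' hp, phi_sub' hp]
  abel

private lemma lie_anti (hs : IsOpen s) (hp : p ∈ s) (hAK : IsAK s S α) (u : E m) :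
    lieXiPhi S.phi S.xi p (S.phi p u) = - S.phi p (lieXiPhi S.phi S.xi p u) := by
  simp only [lieXiPhi]
  rw [phi2_rule hs hp u (S.xi p)]
  rw [S.phi_sq p hp u]
  rw [(fderiv ℝ S.xi p).map_add, (fderiv ℝ S.xi p).map_neg, (fderiv ℝ S.xi p).map_smul]
  rw [phi_add' hp, phi_sub' hp]
  rw [S.phi_sq p hp (fderiv ℝ S.xi p u)]
  have h1 : fderiv ℝ (fun q => S.eta q u) p (S.xi p)
      = - S.eta p (fderiv ℝ S.xi p u) := by
    rw [deta_symm hAK hp (S.xi p) u, etaxi_rule hs hp u]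
  rw [h1]
  module

private lemma hpr_nij (hs : IsOpen s) (hp : p ∈ s) (hAK : IsAK s S α) (u : E m) :
    hpr α S.phi S.xi p u = -((1 / (2*α)) • nijPhi S.phi p u (S.xi p)) := by
  simp only [hpr]
  rw [lie_anti hs hp hAK u, nij_xi hs hp u]
  rw [smul_neg]

private lemma eta_lie (hs : IsOpen s) (hp : p ∈ s) (hAK : IsAK s S α) (u : E m) :
    S.eta p (lieXiPhi S.phi S.xi p u) = 0 := by
  simp only [lieXiPhi]
  rw [eta_add' hp, eta_sub' hp, eta_phi' hp]
  have h1 : S.eta p (fderiv ℝ (fun q => S.phi q u) p (S.xi p))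
      = - fderiv ℝ (fun q => S.eta q (S.phi p u)) p (S.xi p) := by
    rw [etaphi_rule hs hp u (S.xi p)]; ring
  have h2 : S.eta p (fderiv ℝ S.xi p (S.phi p u))
      = - fderiv ℝ (fun q => S.eta q (S.xi p)) p (S.phi p u) := by
    rw [etaxi_rule hs hp (S.phi p u)]; ring
  rw [h1, h2]
  rw [deta_symm hAK hp (S.xi p) (S.phi p u)]
  ring

private lemma eta_nij (hs : IsOpen s) (hp : p ∈ s) (hAK : IsAK s S α) (u v : E m) :
    S.eta p (nijPhi S.phi p u v) = 0 := by
  simp only [nijPhi]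
  rw [eta_sub' hp, eta_add' hp, eta_sub' hp, eta_phi' hp, eta_phi' hp]
  have h1 : S.eta p (fderiv ℝ (fun q => S.phi q v) p (S.phi p u))
      = - fderiv ℝ (fun q => S.eta q (S.phi p v)) p (S.phi p u) := by
    rw [etaphi_rule hs hp v (S.phi p u)]; ring
  have h2 : S.eta p (fderiv ℝ (fun q => S.phi q u) p (S.phi p v))
      = - fderiv ℝ (fun q => S.eta q (S.phi p u)) p (S.phi p v) := by
    rw [etaphi_rule hs hp u (S.phi p v)]; ring
  rw [h1, h2]
  rw [deta_symm hAK hp (S.phi p u) (S.phi p v)]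
  ring

private lemma nij_antisymm (u v : E m) :
    nijPhi S.phi p u v = - nijPhi S.phi p v u := by
  simp only [nijPhi]; abel

private lemma nij_add2 (hs : IsOpen s) (hp : p ∈ s) (u a b : E m) :
    nijPhi S.phi p u (a + b) = nijPhi S.phi p u a + nijPhi S.phi p u b := by
  simp only [nijPhi, fderiv_phi_add hs hp, phi_add' hp, map_add,
    ContinuousLinearMap.add_apply]
  abel

private lemma nij_smul2 (hs : IsOpen s) (hp : p ∈ s) (c : ℝ) (u a : E m) :
    nijPhi S.phi p u (c • a) = c • nijPhi S.phi p u a := by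
  simp only [nijPhi, fderiv_phi_smul hs hp, phi_smul' hp, map_smul,
    ContinuousLinearMap.smul_apply]
  module

private lemma nij_add1 (hs : IsOpen s) (hp : p ∈ s) (a b v : E m) :
    nijPhi S.phi p (a + b) v = nijPhi S.phi p a v + nijPhi S.phi p b v := by
  rw [nij_antisymm (a+b) v, nij_add2 hs hp v a b, nij_antisymm a v, nij_antisymm b v]
  abel

private lemma nij_smul1 (hs : IsOpen s) (hp : p ∈ s) (c : ℝ) (a v : E m) :
    nijPhi S.phi p (c • a) v = c • nijPhi S.phi p a v := by
  rw [nij_antisymm (c • a) v, nij_smul2 hs hp c v a, nij_antisymm a v]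
  module

private lemma nij_D (hs : IsOpen s) (hp : p ∈ s) (hAK : IsAK s S α) (u : E m)
    (hu : S.eta p u = 0) : nijPhi S.phi p (S.phi p u) u = 0 := by
  set r := fderiv ℝ (fun q => S.eta q u) p (S.phi p u)
      + S.eta p (fderiv ℝ (fun q => S.phi q u) p u) with hr
  have hval : nijPhi S.phi p (S.phi p u) u = -(r • S.xi p) := by
    simp only [nijPhi]
    have hpp : S.phi p (S.phi p u) = -u := by
      rw [S.phi_sq p hp u, hu, zero_smul, add_zero]
    rw [hpp]
    rw [(fderiv ℝ (fun q => S.phi q u) p).map_neg]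
    have hrule : ∀ x : E m, fderiv ℝ (fun q => S.phi q (S.phi p u)) p x
        = fderiv ℝ (fun q => S.eta q u) p x • S.xi p
          - S.phi p (fderiv ℝ (fun q => S.phi q u) p x) := by
      intro x
      rw [phi2_rule hs hp u x, hu, zero_smul]
      abel
    rw [hrule (S.phi p u), hrule u]
    rw [phi_sub' hp, phi_smul' hp, phi_xi' hp, smul_zero]
    rw [S.phi_sq p hp (fderiv ℝ (fun q => S.phi q u) p u)]
    rw [hr]
    module
  have h0 := eta_nij hs hp hAK (S.phi p u) u
  rw [hval, (S.lin_eta p hp).map_neg, eta_smul' hp, S.eta_xi p hp, mul_one,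
    neg_eq_zero] at h0
  rw [hval, h0, zero_smul, neg_zero]

end Proofs4
section Proofs5

open Filter Topology

variable {m : ℕ} {s : Set (E m)} {S : ACM s} {p : E m} {α : ℝ}
  {Γ : E m → E m → E m → E m}

private lemma koszul (hΓ : IsLeviCivitaOn s S.g Γ) (hp : p ∈ s) (u v w : E m) :
    2 * S.g p (Γ p u v) w
      = fderiv ℝ (fun q => S.g q v w) p u + fderiv ℝ (fun q => S.g q u w) p v
        - fderiv ℝ (fun q => S.g q u v) p w := by
  have E1 := hΓ.2.2 p hp u v w
  have E2 := hΓ.2.2 p hp v u w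
  have E3 := hΓ.2.2 p hp w u v
  rw [hΓ.2.1 p hp v u] at E2
  rw [hΓ.2.1 p hp w u, hΓ.2.1 p hp w v] at E3
  have s1 : S.g p v (Γ p u w) = S.g p (Γ p u w) v := g_symm' hp _ _
  have s2 : S.g p (Γ p u v) w = S.g p w (Γ p u v) := g_symm' hp _ _
  linarith [E1, E2, E3, s1, s2]

private lemma g_cov_xi (hs : IsOpen s) (hp : p ∈ s) (hAK : IsAK s S α)
    (hΓ : IsLeviCivitaOn s S.g Γ) (u w : E m) :
    2 * S.g p (cov Γ S.xi p u) w
      = S.g p (fderiv ℝ S.xi p u) w + S.g p u (fderiv ℝ S.xi p w)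
        + fderiv ℝ (fun q => S.g q u w) p (S.xi p) := by
  simp only [cov]
  rw [g_add1 hp]
  have hk := koszul hΓ hp u (S.xi p) w
  have h1 : fderiv ℝ (fun q => S.g q (S.xi p) w) p u
      = fderiv ℝ (fun q => S.eta q w) p u - S.g p w (fderiv ℝ S.xi p u) := by
    rw [gswap hs hp (S.xi p) w]
    exact gxi_rule hs hp w u
  have h2 : fderiv ℝ (fun q => S.g q u (S.xi p)) p w
      = fderiv ℝ (fun q => S.eta q u) p w - S.g p u (fderiv ℝ S.xi p w) :=
    gxi_rule hs hp u w
  have h3 := deta_symm hAK hp u w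
  have h4 : S.g p w (fderiv ℝ S.xi p u) = S.g p (fderiv ℝ S.xi p u) w := g_symm' hp _ _
  linarith [hk, h1, h2, h3, h4]

private lemma cov_xi_eta (hs : IsOpen s) (hp : p ∈ s) (hAK : IsAK s S α)
    (hΓ : IsLeviCivitaOn s S.g Γ) (u : E m) :
    S.g p (cov Γ S.xi p u) (S.xi p) = 0 := by
  have h := g_cov_xi hs hp hAK hΓ u (S.xi p)
  have h1 : S.g p (fderiv ℝ S.xi p u) (S.xi p) = S.eta p (fderiv ℝ S.xi p u) :=
    g_eta hp _
  have h2 : fderiv ℝ (fun q => S.g q u (S.xi p)) p (S.xi p)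
      = fderiv ℝ (fun q => S.eta q u) p (S.xi p) - S.g p u (fderiv ℝ S.xi p (S.xi p)) :=
    gxi_rule hs hp u (S.xi p)
  have h3 : fderiv ℝ (fun q => S.eta q u) p (S.xi p)
      = fderiv ℝ (fun q => S.eta q (S.xi p)) p u := deta_symm hAK hp (S.xi p) u
  have h4 := etaxi_rule (S := S) hs hp u
  linarith [h, h1, h2, h3, h4]

private lemma g_cov_symm (hs : IsOpen s) (hp : p ∈ s) (hAK : IsAK s S α)
    (hΓ : IsLeviCivitaOn s S.g Γ) (u w : E m) :
    S.g p (cov Γ S.xi p u) w = S.g p (cov Γ S.xi p w) u := by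
  have h1 := g_cov_xi hs hp hAK hΓ u w
  have h2 := g_cov_xi hs hp hAK hΓ w u
  have h3 : fderiv ℝ (fun q => S.g q u w) p (S.xi p)
      = fderiv ℝ (fun q => S.g q w u) p (S.xi p) := by rw [gswap hs hp u w]
  have h4 : S.g p (fderiv ℝ S.xi p u) w = S.g p w (fderiv ℝ S.xi p u) := g_symm' hp _ _
  have h5 : S.g p u (fderiv ℝ S.xi p w) = S.g p (fderiv ℝ S.xi p w) u := g_symm' hp _ _
  linarith [h1, h2, h3, h4, h5]

private lemma dphiXi_rule (hs : IsOpen s) (hp : p ∈ s) (a x : E m) :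
    fderiv ℝ (fun q => S.g q (S.xi p) (S.phi q a)) p x
      = - S.g p (fderiv ℝ S.xi p x) (S.phi p a) := by
  rw [gphi_rule hs hp (S.xi p) a x]
  have h1 : S.g p (S.xi p) (fderiv ℝ (fun q => S.phi q a) p x)
      = - fderiv ℝ (fun q => S.eta q (S.phi p a)) p x := by
    rw [g_eta' hp, etaphi_rule hs hp a x]; ring
  have h2 : fderiv ℝ (fun q => S.g q (S.xi p) (S.phi p a)) p x
      = fderiv ℝ (fun q => S.eta q (S.phi p a)) p x
        - S.g p (S.phi p a) (fderiv ℝ S.xi p x) := by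
    rw [gswap hs hp (S.xi p) (S.phi p a)]
    exact gxi_rule hs hp (S.phi p a) x
  rw [h1, h2]
  have h3 : S.g p (S.phi p a) (fderiv ℝ S.xi p x)
      = S.g p (fderiv ℝ S.xi p x) (S.phi p a) := g_symm' hp _ _
  linarith [h3]

private lemma dPhi_I (hs : IsOpen s) (hp : p ∈ s) (hAK : IsAK s S α) (v w : E m) :
    fderiv ℝ (fun q => S.g q v (S.phi q w)) p (S.xi p)
      = 2*α*(S.g p v (S.phi p w)) - S.g p (fderiv ℝ S.xi p v) (S.phi p w)
        + S.g p (fderiv ℝ S.xi p w) (S.phi p v) := by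
  have hd := hAK.dphi p hp (S.xi p) v w
  simp only [FPhi] at hd
  rw [S.eta_xi p hp] at hd
  have h0 : ∀ a : E m, S.g p (S.xi p) (S.phi p a) = 0 := by
    intro a; rw [g_eta' hp, eta_phi' hp]
  rw [h0 v, h0 w] at hd
  rw [dphiXi_rule hs hp w v, dphiXi_rule hs hp v w] at hd
  linarith [hd]

private lemma g_cov_xi_phi (hs : IsOpen s) (hp : p ∈ s) (hAK : IsAK s S α)
    (hΓ : IsLeviCivitaOn s S.g Γ) (u z : E m) :
    2 * S.g p (cov Γ S.xi p u) (S.phi p z)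
      = 2*α*(S.g p u (S.phi p z)) - S.g p u (lieXiPhi S.phi S.xi p z) := by
  have h := g_cov_xi hs hp hAK hΓ u (S.phi p z)
  have h1 : fderiv ℝ (fun q => S.g q u (S.phi q z)) p (S.xi p)
      = fderiv ℝ (fun q => S.g q u (S.phi p z)) p (S.xi p)
        + S.g p u (fderiv ℝ (fun q => S.phi q z) p (S.xi p)) :=
    gphi_rule hs hp u z (S.xi p)
  have hI := dPhi_I hs hp hAK u z
  have h2 : S.g p u (lieXiPhi S.phi S.xi p z)
      = S.g p u (fderiv ℝ (fun q => S.phi q z) p (S.xi p))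
        - S.g p u (fderiv ℝ S.xi p (S.phi p z))
        + S.g p u (S.phi p (fderiv ℝ S.xi p z)) := by
    simp only [lieXiPhi]
    rw [g_add2 hp, g_sub2 hp]
  have h3 : S.g p (fderiv ℝ S.xi p z) (S.phi p u)
      = - S.g p u (S.phi p (fderiv ℝ S.xi p z)) := by
    rw [g_phi_skew hp (fderiv ℝ S.xi p z) u]
    rw [g_symm' hp (S.phi p (fderiv ℝ S.xi p z)) u]
  have h4 : S.g p (fderiv ℝ S.xi p u) (S.phi p z)
      = S.g p (fderiv ℝ S.xi p u) (S.phi p z) := rfl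
  linarith [h, h1, hI, h2, h3]

private lemma lie_symm (hs : IsOpen s) (hp : p ∈ s) (hAK : IsAK s S α)
    (hΓ : IsLeviCivitaOn s S.g Γ) (u z : E m) :
    S.g p u (lieXiPhi S.phi S.xi p z) = S.g p z (lieXiPhi S.phi S.xi p u) := by
  have h1 := g_cov_xi_phi hs hp hAK hΓ u z
  have h2 := g_cov_xi_phi hs hp hAK hΓ (S.phi p z) (S.phi p u)
  have hsy : S.g p (cov Γ S.xi p u) (S.phi p z)
      = S.g p (cov Γ S.xi p (S.phi p z)) u := g_cov_symm hs hp hAK hΓ u (S.phi p z)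
  have hu : u = -(S.phi p (S.phi p u)) + S.eta p u • S.xi p := by
    have := S.phi_sq p hp u
    linear_combination (norm := module) this
  have hdec : S.g p (cov Γ S.xi p (S.phi p z)) u
      = - S.g p (cov Γ S.xi p (S.phi p z)) (S.phi p (S.phi p u))
        + S.eta p u * S.g p (cov Γ S.xi p (S.phi p z)) (S.xi p) := by
    nth_rewrite 1 [hu]
    rw [g_add2 hp, g_neg2 hp, g_smul2 hp]
  rw [cov_xi_eta hs hp hAK hΓ (S.phi p z)] at hdec
  have h5 : S.g p (S.phi p z) (S.phi p (S.phi p u)) = S.g p z (S.phi p u) := by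
    rw [S.compat p hp z (S.phi p u), eta_phi' hp, mul_zero, sub_zero]
  have h6 : S.g p (S.phi p z) (lieXiPhi S.phi S.xi p (S.phi p u))
      = - S.g p z (lieXiPhi S.phi S.xi p u) := by
    rw [lie_anti hs hp hAK u, g_neg2 hp]
    rw [S.compat p hp z (lieXiPhi S.phi S.xi p u), eta_lie hs hp hAK u, mul_zero, sub_zero]
  have h7 : S.g p u (S.phi p z) = - S.g p z (S.phi p u) := by
    rw [g_phi_skew hp u z, g_symm' hp (S.phi p u) z]
  linear_combination h1 - 2*hsy - 2*hdec + h2 + (2*α)*h5 - h6 + (2*α)*h7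

private lemma cov_xi_formula (hs : IsOpen s) (hp : p ∈ s) (hAK : IsAK s S α)
    (hΓ : IsLeviCivitaOn s S.g Γ) (u : E m) :
    cov Γ S.xi p u = α • (u - S.eta p u • S.xi p) + α • hpr α S.phi S.xi p u := by
  have hα : α ≠ 0 := ne_of_gt hAK.pos
  set R := α • (u - S.eta p u • S.xi p) + α • hpr α S.phi S.xi p u with hR
  have hgR_xi : S.g p R (S.xi p) = 0 := by
    rw [hR, g_add1 hp, g_smul1 hp, g_smul1 hp, g_sub1 hp, g_smul1 hp, g_eta hp,
      g_xi_xi hp]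
    have h1 : S.g p (hpr α S.phi S.xi p u) (S.xi p) = 0 := by
      rw [g_eta hp]
      simp only [hpr]
      rw [eta_smul' hp, eta_lie hs hp hAK (S.phi p u), mul_zero]
    rw [h1]; ring
  have hgR_phi : ∀ z, S.g p R (S.phi p z)
      = α * S.g p u (S.phi p z) - (1/2) * S.g p u (lieXiPhi S.phi S.xi p z) := by
    intro z
    rw [hR, g_add1 hp, g_smul1 hp, g_smul1 hp, g_sub1 hp, g_smul1 hp]
    have h0 : S.g p (S.xi p) (S.phi p z) = 0 := by rw [g_eta' hp, eta_phi' hp]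
    have h1 : S.g p (hpr α S.phi S.xi p u) (S.phi p z)
        = -((1/(2*α)) * S.g p u (lieXiPhi S.phi S.xi p z)) := by
      simp only [hpr]
      rw [g_smul1 hp, lie_anti hs hp hAK u, g_neg1 hp]
      have h2 : S.g p (S.phi p (lieXiPhi S.phi S.xi p u)) (S.phi p z)
          = S.g p u (lieXiPhi S.phi S.xi p z) := by
        rw [S.compat p hp (lieXiPhi S.phi S.xi p u) z, eta_lie hs hp hAK u, zero_mul,
          sub_zero]
        rw [g_symm' hp (lieXiPhi S.phi S.xi p u) z]
        exact lie_symm hs hp hAK hΓ z u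
      rw [h2]; ring
    rw [h0, h1]
    field_simp
    ring
  have hcov_xi := cov_xi_eta hs hp hAK hΓ u
  have hcov_phi : ∀ z, S.g p (cov Γ S.xi p u) (S.phi p z)
      = α * S.g p u (S.phi p z) - (1/2) * S.g p u (lieXiPhi S.phi S.xi p z) := by
    intro z
    have := g_cov_xi_phi hs hp hAK hΓ u z
    linarith [this]
  have key : ∀ w, S.g p (cov Γ S.xi p u - R) w = 0 := by
    intro w
    have hw : w = -(S.phi p (S.phi p w)) + S.eta p w • S.xi p := by
      have := S.phi_sq p hp w
      linear_combination (norm := module) this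
    rw [g_sub1 hp]
    calc S.g p (cov Γ S.xi p u) w - S.g p R w
        = S.g p (cov Γ S.xi p u) (-(S.phi p (S.phi p w)) + S.eta p w • S.xi p)
          - S.g p R (-(S.phi p (S.phi p w)) + S.eta p w • S.xi p) := by rw [← hw]
      _ = 0 := by
          rw [g_add2 hp, g_add2 hp, g_neg2 hp, g_neg2 hp, g_smul2 hp, g_smul2 hp]
          rw [hcov_xi, hgR_xi, hcov_phi (S.phi p w), hgR_phi (S.phi p w)]
          ring
  have hz := g_nondeg hp key
  have : cov Γ S.xi p u - R = 0 := hz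
  linear_combination (norm := module) this

end Proofs5
section Proofs6

open Filter Topology

variable {m : ℕ} {s : Set (E m)} {S : ACM s} {p : E m} {α : ℝ}

private lemma self_neg_zero {W : Type*} [AddCommGroup W] [Module ℝ W] {x : W}
    (h : x = -x) : x = 0 := by
  have h2 : (2:ℝ) • x = 0 := by linear_combination (norm := module) h
  rcases smul_eq_zero.mp h2 with h3 | h3
  · norm_num at h3
  · exact h3

private lemma nijxi_zero (hs : IsOpen s) (hp : p ∈ s) (hAK : IsAK s S α)
    (h0 : ∀ u : E m, hpr α S.phi S.xi p u = 0) (w : E m) :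
    nijPhi S.phi p w (S.xi p) = 0 := by
  have hαpos := hAK.pos
  have h := hpr_nij hs hp hAK w
  rw [h0 w] at h
  have h2 : (1/(2*α)) • nijPhi S.phi p w (S.xi p) = 0 := by
    linear_combination (norm := module) h
  rcases smul_eq_zero.mp h2 with h3 | h3
  · exact absurd h3 (one_div_ne_zero (by positivity))
  · exact h3

private lemma hpr_zero_of_normal (hs : IsOpen s) (hAK : IsAK s S α) (hN : IsNormal s S) :
    ∀ p ∈ s, ∀ u : E m, hpr α S.phi S.xi p u = 0 := by
  intro p hp u
  have h := hN p hp u (S.xi p)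
  rw [hAK.deta p hp u (S.xi p), mul_zero, zero_smul, add_zero] at h
  rw [hpr_nij hs hp hAK u, h, smul_zero, neg_zero]

private lemma normal_of_hpr_zero (hs : IsOpen s) (hAK : IsAK s S α)
    (hCR : CRIntegrableOn s S)
    (h0 : ∀ p ∈ s, ∀ u : E m, hpr α S.phi S.xi p u = 0) : IsNormal s S := by
  intro p hp u v
  have hnijxi : ∀ w : E m, nijPhi S.phi p w (S.xi p) = 0 :=
    nijxi_zero hs hp hAK (h0 p hp)
  have hetau0 : S.eta p (u - S.eta p u • S.xi p) = 0 := by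
    rw [eta_sub' hp, eta_smul' hp, S.eta_xi p hp]; ring
  have hetav0 : S.eta p (v - S.eta p v • S.xi p) = 0 := by
    rw [eta_sub' hp, eta_smul' hp, S.eta_xi p hp]; ring
  have e1 : (u - S.eta p u • S.xi p) + S.eta p u • S.xi p = u := by abel
  have e2 : (v - S.eta p v • S.xi p) + S.eta p v • S.xi p = v := by abel
  have hnij : nijPhi S.phi p u v = 0 := by
    rw [← e1, ← e2]
    rw [nij_add1 hs hp, nij_smul1 hs hp]
    rw [nij_add2 hs hp, nij_add2 hs hp, nij_smul2 hs hp, nij_smul2 hs hp]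
    have c1 : nijPhi S.phi p (u - S.eta p u • S.xi p) (v - S.eta p v • S.xi p) = 0 :=
      hCR p hp _ _ hetau0 hetav0
    have c2 : nijPhi S.phi p (u - S.eta p u • S.xi p) (S.xi p) = 0 := hnijxi _
    have c3 : nijPhi S.phi p (S.xi p) (v - S.eta p v • S.xi p) = 0 := by
      rw [nij_antisymm, hnijxi _, neg_zero]
    have c4 : nijPhi S.phi p (S.xi p) (S.xi p) = 0 :=
      self_neg_zero (nij_antisymm _ _)
    rw [c1, c2, c3, c4]
    simp
  rw [hAK.deta p hp u v, mul_zero, zero_smul, add_zero, hnij]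

private lemma cr3 {s3 : Set (E 3)} {S3 : ACM s3} (hs3 : IsOpen s3) (hAK3 : IsAK s3 S3 α) :
    CRIntegrableOn s3 S3 := by
  intro p hp a b ha hb
  by_cases hzero : a = 0
  · have hz : nijPhi S3.phi p a b = nijPhi S3.phi p ((0:ℝ) • a) b := by
      rw [zero_smul, hzero]
    rw [hz, nij_smul1 hs3 hp, zero_smul]
  · set T : Fin 3 → E 3 := ![a, S3.phi p a, S3.xi p] with hT
    have hli : LinearIndependent ℝ T := by
      rw [Fintype.linearIndependent_iff]
      intro c hc
      simp only [hT, Fin.sum_univ_three, Matrix.cons_val_zero, Matrix.cons_val_one,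
        Matrix.head_cons, Matrix.cons_val_two, Matrix.tail_cons] at hc
      have h2 : c 2 = 0 := by
        have hη := congrArg (S3.eta p) hc
        rw [eta_add' hp, eta_add' hp, eta_smul' hp, eta_smul' hp, eta_smul' hp, ha,
          eta_phi' hp, S3.eta_xi p hp, eta_zero' hp] at hη
        linarith [hη]
      rw [h2, zero_smul, add_zero] at hc
      have hphi := congrArg (S3.phi p) hc
      rw [phi_add' hp, phi_smul' hp, phi_smul' hp, S3.phi_sq p hp a, ha, zero_smul,
        add_zero, phi_zero' hp] at hphi
      have key : (c 0 * c 0 + c 1 * c 1) • a = 0 := by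
        linear_combination (norm := module) (c 0 : ℝ) • hc - (c 1 : ℝ) • hphi
      have hcoef : c 0 * c 0 + c 1 * c 1 = 0 := by
        rcases smul_eq_zero.mp key with h | h
        · exact h
        · exact absurd h hzero
      have h00 : c 0 = 0 := by
        have n0 := mul_self_nonneg (c 0)
        have n1 := mul_self_nonneg (c 1)
        have hq : c 0 * c 0 = 0 := by linarith
        exact mul_self_eq_zero.mp hq
      have h11 : c 1 = 0 := by
        have n0 := mul_self_nonneg (c 0)
        have n1 := mul_self_nonneg (c 1)
        have hq : c 1 * c 1 = 0 := by linarith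
        exact mul_self_eq_zero.mp hq
      intro i
      fin_cases i
      · exact h00
      · exact h11
      · exact h2
    have hcard : Fintype.card (Fin 3) = Module.finrank ℝ (E 3) := by
      simp [finrank_euclideanSpace_fin]
    have hspan := hli.span_eq_top_of_card_eq_finrank hcard
    have hmem : b ∈ Submodule.span ℝ (Set.range T) := by
      rw [hspan]; trivial
    obtain ⟨c, hc⟩ := (Submodule.mem_span_range_iff_exists_fun ℝ).mp hmem
    simp only [hT, Fin.sum_univ_three, Matrix.cons_val_zero, Matrix.cons_val_one,
      Matrix.head_cons, Matrix.cons_val_two, Matrix.tail_cons] at hc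
    have hc2 : c 2 = 0 := by
      have hη := congrArg (S3.eta p) hc
      rw [eta_add' hp, eta_add' hp, eta_smul' hp, eta_smul' hp, eta_smul' hp, ha,
        eta_phi' hp, S3.eta_xi p hp, hb] at hη
      linarith [hη]
    have hb' : b = c 0 • a + c 1 • S3.phi p a := by
      rw [← hc, hc2, zero_smul, add_zero]
    rw [hb', nij_add2 hs3 hp, nij_smul2 hs3 hp, nij_smul2 hs3 hp]
    have e1 : nijPhi S3.phi p a a = 0 := self_neg_zero (nij_antisymm _ _)
    have e2 : nijPhi S3.phi p a (S3.phi p a) = 0 := by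
      rw [nij_antisymm, nij_D hs3 hp hAK3 a ha, neg_zero]
    rw [e1, e2, smul_zero, smul_zero, add_zero]

end Proofs6
/-- with Kähler leaves of `D`, normality is equivalent to `h' = 0`,
equivalently `∇ξ = -α φ²`; in particular in dimension 3, `h' = 0` implies normality. -/
theorem stmt_2 (n : ℕ) (s : Set (E (2*n+1))) (hs : IsOpen s) (S : ACM s) (α : ℝ)
    (hAK : IsAK s S α) (hleaves : CRIntegrableOn s S)
    (Γ : E (2*n+1) → E (2*n+1) → E (2*n+1) → E (2*n+1))
    (hΓ : IsLeviCivitaOn s S.g Γ) :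
    (IsNormal s S ↔ (∀ p ∈ s, ∀ u : E (2*n+1), hpr α S.phi S.xi p u = 0)) ∧
    (IsNormal s S ↔ (∀ p ∈ s, ∀ u : E (2*n+1),
        cov Γ S.xi p u = -(α • S.phi p (S.phi p u)))) ∧
    (∀ s3 : Set (E 3), IsOpen s3 → ∀ S3 : ACM s3, IsAK s3 S3 α →
      (∀ p ∈ s3, ∀ u : E 3, hpr α S3.phi S3.xi p u = 0) → IsNormal s3 S3) := by
  have hα : α ≠ 0 := ne_of_gt hAK.pos
  have iff1 : IsNormal s S ↔ (∀ p ∈ s, ∀ u : E (2*n+1), hpr α S.phi S.xi p u = 0) :=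
    ⟨hpr_zero_of_normal hs hAK, normal_of_hpr_zero hs hAK hleaves⟩
  refine ⟨iff1, ?_, ?_⟩
  · rw [iff1]
    constructor
    · intro h0 p hp u
      rw [cov_xi_formula hs hp hAK hΓ u, h0 p hp u, smul_zero, add_zero,
        S.phi_sq p hp u]
      module
    · intro hc p hp u
      have h := cov_xi_formula hs hp hAK hΓ u
      rw [hc p hp u, S.phi_sq p hp u] at h
      have h2 : α • hpr α S.phi S.xi p u = 0 := by
        linear_combination (norm := module) -h
      rcases smul_eq_zero.mp h2 with h3 | h3
      · exact absurd h3 hα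
      · exact h3
  · intro s3 hs3 S3 hAK3 h0
    exact normal_of_hpr_zero hs3 hAK3 (cr3 hs3 hAK3) h0

end AKG
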